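/- Let h: (ℂ^n, 0) → (ℂ, 0) be an analytic germ, I ⊆ {1,...,n} nonempty with h|_{ℂ^I} ≢ 0, and let q = (q_1,...,q_n) ∈ ℝ^n with q_i > 0 for i ∈ I and q_i = 0 for i ∉ I. Set Δ := Δ(q, Γ₊(h|_{ℂ^I})). Then there exists a strictly positive vector q' ∈ ℝ^n_{>0} such that Δ = Δ(q', Γ₊(h)). -/

import Mathlib

/-- The Newton polyhedron of a set of exponents: convex hull of `S + ℝ^n_{≥0}`. -/
def NewtonPolyhedron (n : ℕ) (S : Set (Fin n →₀ ℕ)) : Set (Fin n → ℝ) :=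
  convexHull ℝ
    {x | ∃ α ∈ S, ∃ v : Fin n → ℝ, (∀ i, 0 ≤ v i) ∧ x = (fun i => (α i : ℝ)) + v}

/-- The Newton polyhedron taken inside the coordinate subspace `ℝ^I`. -/
def NewtonPolyhedronIn (n : ℕ) (I : Finset (Fin n)) (S : Set (Fin n →₀ ℕ)) :
    Set (Fin n → ℝ) :=
  convexHull ℝ
    {x | ∃ α ∈ S, ∃ v : Fin n → ℝ, (∀ i, 0 ≤ v i) ∧ (∀ i ∉ I, v i = 0) ∧
      x = (fun i => (α i : ℝ)) + v}

/-- `d(q, Γ) := inf {⟨q, x⟩ : x ∈ Γ}`. -/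
noncomputable def dmin (n : ℕ) (q : Fin n → ℝ) (Γ : Set (Fin n → ℝ)) : ℝ :=
  sInf {r : ℝ | ∃ x ∈ Γ, r = ∑ i, q i * x i}

/-- `Δ(q, Γ) := {x ∈ Γ : ⟨q, x⟩ = d(q, Γ)}`. -/
noncomputable def faceOf (n : ℕ) (q : Fin n → ℝ) (Γ : Set (Fin n → ℝ)) :
    Set (Fin n → ℝ) :=
  {x ∈ Γ | ∑ i, q i * x i = dmin n q Γ}

section Aux

lemma stmt3_isLin (n : ℕ) (q : Fin n → ℝ) :
    IsLinearMap ℝ (fun x : Fin n → ℝ => ∑ i, q i * x i) := by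
  constructor
  · intro x y
    simp [mul_add, Finset.sum_add_distrib]
  · intro c x
    simp only [Pi.smul_apply, smul_eq_mul, Finset.mul_sum]
    exact Finset.sum_congr rfl fun i _ => by ring

lemma stmt3_dmin_hull (n : ℕ) (q : Fin n → ℝ) (G : Set (Fin n → ℝ)) (d : ℝ)
    (hlb : ∀ x ∈ G, d ≤ ∑ i, q i * x i)
    (hmem : ∃ x ∈ G, (∑ i, q i * x i) = d) :
    dmin n q (convexHull ℝ G) = d := by
  obtain ⟨x₀, hx₀, hx₀d⟩ := hmem
  have hhull : ∀ x ∈ convexHull ℝ G, d ≤ ∑ i, q i * x i := fun x hx =>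
    convexHull_min (fun y hy => hlb y hy) (convex_halfSpace_ge (stmt3_isLin n q) d) hx
  unfold dmin
  apply le_antisymm
  · exact csInf_le ⟨d, by rintro r ⟨x, hx, rfl⟩; exact hhull x hx⟩
      ⟨x₀, subset_convexHull ℝ G hx₀, hx₀d.symm⟩
  · exact le_csInf ⟨d, x₀, subset_convexHull ℝ G hx₀, hx₀d.symm⟩
      (by rintro r ⟨x, hx, rfl⟩; exact hhull x hx)

lemma stmt3_face_hull (n : ℕ) (q : Fin n → ℝ) (G : Set (Fin n → ℝ)) (d : ℝ)
    (hlb : ∀ x ∈ G, d ≤ ∑ i, q i * x i)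
    (hmem : ∃ x ∈ G, (∑ i, q i * x i) = d) :
    faceOf n q (convexHull ℝ G) = convexHull ℝ {x ∈ G | ∑ i, q i * x i = d} := by
  classical
  have hd := stmt3_dmin_hull n q G d hlb hmem
  have hhull : ∀ x ∈ convexHull ℝ G, d ≤ ∑ i, q i * x i := fun x hx =>
    convexHull_min (fun y hy => hlb y hy) (convex_halfSpace_ge (stmt3_isLin n q) d) hx
  ext x
  constructor
  · rintro ⟨hx, hfx⟩
    rw [hd] at hfx
    rw [convexHull_eq] at hx
    obtain ⟨ι, t, w, z, hw0, hw1, hz, hcm⟩ := hx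
    have hxsum : x = ∑ j ∈ t, w j • z j := by
      rw [← hcm, Finset.centerMass_eq_of_sum_1 _ _ hw1]
    have key : ∑ i, q i * x i = ∑ j ∈ t, w j * (∑ i, q i * z j i) := by
      have hxi : ∀ i, x i = ∑ j ∈ t, w j * z j i := by
        intro i; rw [hxsum]; simp [Finset.sum_apply]
      simp only [hxi, Finset.mul_sum]
      rw [Finset.sum_comm]
      exact Finset.sum_congr rfl fun j _ => Finset.sum_congr rfl fun i _ => by ring
    have hsum0 : ∑ j ∈ t, w j * ((∑ i, q i * z j i) - d) = 0 := by
      simp only [mul_sub]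
      rw [Finset.sum_sub_distrib, ← key, ← Finset.sum_mul, hw1, hfx]; ring
    have hzero : ∀ j ∈ t, w j * ((∑ i, q i * z j i) - d) = 0 := by
      intro j hj
      refine (Finset.sum_eq_zero_iff_of_nonneg ?_).mp hsum0 j hj
      intro k hk
      exact mul_nonneg (hw0 k hk) (sub_nonneg.mpr (hlb _ (hz k hk)))
    have hx' : x = (t.filter (fun j => w j ≠ 0)).centerMass w z := by
      rw [Finset.centerMass_filter_ne_zero, hcm]
    rw [hx']
    apply Finset.centerMass_mem_convexHull
    · intro j hj; exact hw0 j (Finset.mem_filter.mp hj).1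
    · rw [Finset.sum_filter_ne_zero, hw1]; exact one_pos
    · intro j hj
      obtain ⟨hjt, hjw⟩ := Finset.mem_filter.mp hj
      refine ⟨hz j hjt, ?_⟩
      rcases mul_eq_zero.mp (hzero j hjt) with h' | h'
      · exact absurd h' hjw
      · linarith [sub_eq_zero.mp h']
  · intro hx
    have hxG : x ∈ convexHull ℝ G := convexHull_mono (fun y hy => hy.1) hx
    refine ⟨hxG, ?_⟩
    rw [hd]
    have h1 : x ∈ {y : Fin n → ℝ | ∑ i, q i * y i ≤ d} :=
      convexHull_min (fun y hy => le_of_eq hy.2) (convex_halfSpace_le (stmt3_isLin n q) d) hx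
    have h2 : d ≤ ∑ i, q i * x i := hhull x hxG
    exact le_antisymm h1 h2

end Aux

section Aux2

lemma stmt3_split (n : ℕ) (q : Fin n → ℝ) (α : Fin n →₀ ℕ) (v : Fin n → ℝ) :
    (∑ i, q i * (((fun i => (α i : ℝ)) + v) i))
      = (∑ i, q i * (α i : ℝ)) + ∑ i, q i * v i := by
  rw [← Finset.sum_add_distrib]
  exact Finset.sum_congr rfl fun i _ => by simp [mul_add]

lemma stmt3_faceIn (n : ℕ) (I : Finset (Fin n)) (q : Fin n → ℝ)
    (hq0 : ∀ i, 0 ≤ q i) (hqpos : ∀ i ∈ I, 0 < q i)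
    (T : Set (Fin n →₀ ℕ)) (d₀ : ℝ)
    (hmin : ∀ α ∈ T, d₀ ≤ ∑ i, q i * (α i : ℝ))
    (hex : ∃ α ∈ T, (∑ i, q i * (α i : ℝ)) = d₀) :
    faceOf n q (NewtonPolyhedronIn n I T)
      = convexHull ℝ {x | ∃ α ∈ T, (∑ i, q i * (α i : ℝ)) = d₀ ∧
          x = fun i => (α i : ℝ)} := by
  classical
  have hlb : ∀ x ∈ {x : Fin n → ℝ | ∃ α ∈ T, ∃ v : Fin n → ℝ, (∀ i, 0 ≤ v i) ∧
      (∀ i ∉ I, v i = 0) ∧ x = (fun i => (α i : ℝ)) + v}, d₀ ≤ ∑ i, q i * x i := by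
    rintro x ⟨α, hαT, v, hv0, hvI, rfl⟩
    rw [stmt3_split]
    have h2 : (0:ℝ) ≤ ∑ i, q i * v i :=
      Finset.sum_nonneg fun i _ => mul_nonneg (hq0 i) (hv0 i)
    have h1 := hmin α hαT
    linarith
  have hmem : ∃ x ∈ {x : Fin n → ℝ | ∃ α ∈ T, ∃ v : Fin n → ℝ, (∀ i, 0 ≤ v i) ∧
      (∀ i ∉ I, v i = 0) ∧ x = (fun i => (α i : ℝ)) + v},
      (∑ i, q i * x i) = d₀ := by
    obtain ⟨α, hαT, hα⟩ := hex
    exact ⟨fun i => (α i : ℝ), ⟨α, hαT, 0, fun i => le_refl 0, fun i _ => rfl,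
      (add_zero _).symm⟩, hα⟩
  unfold NewtonPolyhedronIn
  rw [stmt3_face_hull n q _ d₀ hlb hmem]
  congr 1
  ext x
  constructor
  · rintro ⟨⟨α, hαT, v, hv0, hvI, rfl⟩, hfx⟩
    rw [stmt3_split] at hfx
    have h1 := hmin α hαT
    have h2 : (0:ℝ) ≤ ∑ i, q i * v i :=
      Finset.sum_nonneg fun i _ => mul_nonneg (hq0 i) (hv0 i)
    have hfqα : (∑ i, q i * (α i : ℝ)) = d₀ := by linarith
    have hvsum : ∑ i, q i * v i = 0 := by linarith
    have hv : v = 0 := by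
      funext i
      by_cases hi : i ∈ I
      · have h3 := (Finset.sum_eq_zero_iff_of_nonneg
          (fun j _ => mul_nonneg (hq0 j) (hv0 j))).mp hvsum i (Finset.mem_univ i)
        have h4 := (mul_eq_zero.mp h3).resolve_left (ne_of_gt (hqpos i hi))
        simpa using h4
      · simpa using hvI i hi
    exact ⟨α, hαT, hfqα, by rw [hv, add_zero]⟩
  · rintro ⟨α, hαT, hfα, rfl⟩
    exact ⟨⟨α, hαT, 0, fun i => le_refl 0, fun i _ => rfl, (add_zero _).symm⟩, hfα⟩

lemma stmt3_faceFull (n : ℕ) (q' : Fin n → ℝ) (hq'pos : ∀ i, 0 < q' i)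
    (S : Set (Fin n →₀ ℕ)) (d₀ : ℝ)
    (hmin : ∀ α ∈ S, d₀ ≤ ∑ i, q' i * (α i : ℝ))
    (hex : ∃ α ∈ S, (∑ i, q' i * (α i : ℝ)) = d₀) :
    faceOf n q' (NewtonPolyhedron n S)
      = convexHull ℝ {x | ∃ α ∈ S, (∑ i, q' i * (α i : ℝ)) = d₀ ∧
          x = fun i => (α i : ℝ)} := by
  classical
  have hlb : ∀ x ∈ {x : Fin n → ℝ | ∃ α ∈ S, ∃ v : Fin n → ℝ, (∀ i, 0 ≤ v i) ∧
      x = (fun i => (α i : ℝ)) + v}, d₀ ≤ ∑ i, q' i * x i := by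
    rintro x ⟨α, hαS, v, hv0, rfl⟩
    rw [stmt3_split]
    have h2 : (0:ℝ) ≤ ∑ i, q' i * v i :=
      Finset.sum_nonneg fun i _ => mul_nonneg (hq'pos i).le (hv0 i)
    have h1 := hmin α hαS
    linarith
  have hmem : ∃ x ∈ {x : Fin n → ℝ | ∃ α ∈ S, ∃ v : Fin n → ℝ, (∀ i, 0 ≤ v i) ∧
      x = (fun i => (α i : ℝ)) + v}, (∑ i, q' i * x i) = d₀ := by
    obtain ⟨α, hαS, hα⟩ := hex
    exact ⟨fun i => (α i : ℝ), ⟨α, hαS, 0, fun i => le_refl 0,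
      (add_zero _).symm⟩, hα⟩
  unfold NewtonPolyhedron
  rw [stmt3_face_hull n q' _ d₀ hlb hmem]
  congr 1
  ext x
  constructor
  · rintro ⟨⟨α, hαS, v, hv0, rfl⟩, hfx⟩
    rw [stmt3_split] at hfx
    have h1 := hmin α hαS
    have h2 : (0:ℝ) ≤ ∑ i, q' i * v i :=
      Finset.sum_nonneg fun i _ => mul_nonneg (hq'pos i).le (hv0 i)
    have hfqα : (∑ i, q' i * (α i : ℝ)) = d₀ := by linarith
    have hvsum : ∑ i, q' i * v i = 0 := by linarith
    have hv : v = 0 := by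
      funext i
      have h3 := (Finset.sum_eq_zero_iff_of_nonneg
        (fun j _ => mul_nonneg (hq'pos j).le (hv0 j))).mp hvsum i (Finset.mem_univ i)
      have h4 := (mul_eq_zero.mp h3).resolve_left (ne_of_gt (hq'pos i))
      simpa using h4
    exact ⟨α, hαS, hfqα, by rw [hv, add_zero]⟩
  · rintro ⟨α, hαS, hfα, rfl⟩
    exact ⟨⟨α, hαS, 0, fun i => le_refl 0, (add_zero _).symm⟩, hfα⟩

end Aux2

/-- If `h|_{ℂ^I} ≢ 0` and `q` is strictly positive exactly on `I` and zero
outside `I`, then the face `Δ(q, Γ₊(h|_{ℂ^I}))` can be realized as a face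
`Δ(q', Γ₊(h))` for a strictly positive vector `q'`. -/
theorem stmt_3 (n : ℕ) (h : MvPowerSeries (Fin n) ℂ) (I : Finset (Fin n))
    (hI : I.Nonempty)
    (hres : ∃ α : Fin n →₀ ℕ, MvPowerSeries.coeff α h ≠ 0 ∧ ∀ i ∉ I, α i = 0)
    (q : Fin n → ℝ) (hqpos : ∀ i ∈ I, 0 < q i) (hqzero : ∀ i ∉ I, q i = 0) :
    ∃ q' : Fin n → ℝ, (∀ i, 0 < q' i) ∧
      faceOf n q (NewtonPolyhedronIn n I
          {α | MvPowerSeries.coeff α h ≠ 0 ∧ ∀ i ∉ I, α i = 0})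
        = faceOf n q' (NewtonPolyhedron n {α | MvPowerSeries.coeff α h ≠ 0}) := by
  classical
  obtain ⟨α₀, hc₀, hz₀⟩ := hres
  have hq0 : ∀ i, 0 ≤ q i := fun i => by
    by_cases hi : i ∈ I
    · exact (hqpos i hi).le
    · exact le_of_eq (hqzero i hi).symm
  -- minimizer of the weight on the exponents supported in I
  set ε : ℝ := I.inf' hI q with hεdef
  have hε : 0 < ε := (Finset.lt_inf'_iff hI).mpr hqpos
  set B : ℝ := ∑ i, q i * ((α₀ i : ℕ) : ℝ) with hBdef
  set c : ℕ := ⌈B / ε⌉₊ with hcdef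
  set β : Fin n →₀ ℕ := Finsupp.equivFunOnFinite.symm (fun _ => c) with hβdef
  have hβ : ∀ i, β i = c := fun i => rfl
  have hT'fin : Set.Finite {α : Fin n →₀ ℕ |
      (MvPowerSeries.coeff α h ≠ 0 ∧ ∀ i ∉ I, α i = 0) ∧
      (∑ i, q i * (α i : ℝ)) ≤ B} := by
    apply Set.Finite.subset (Finset.finite_toSet (Finset.Iic β))
    rintro α ⟨⟨hcα, hzα⟩, hfα⟩
    simp only [Finset.coe_Iic, Set.mem_Iic]
    rw [Finsupp.le_def]
    intro i
    by_cases hi : i ∈ I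
    · have h1 : q i * (α i : ℝ) ≤ B :=
        le_trans (Finset.single_le_sum (f := fun j => q j * (α j : ℝ))
          (fun j _ => mul_nonneg (hq0 j) (Nat.cast_nonneg _)) (Finset.mem_univ i)) hfα
      have h2 : ε * (α i : ℝ) ≤ q i * (α i : ℝ) :=
        mul_le_mul_of_nonneg_right (Finset.inf'_le q hi) (Nat.cast_nonneg _)
      have h3 : (α i : ℝ) ≤ B / ε := (le_div_iff₀ hε).mpr (by rw [mul_comm]; linarith)
      have h4 : (α i : ℝ) ≤ (c : ℝ) := h3.trans (Nat.le_ceil _)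
      rw [hβ i]
      exact_mod_cast h4
    · rw [hzα i hi]
      exact Nat.zero_le _
  obtain ⟨αs, ⟨hαsT, hαsB⟩, hαsmin⟩ :=
    Set.exists_min_image {α : Fin n →₀ ℕ |
      (MvPowerSeries.coeff α h ≠ 0 ∧ ∀ i ∉ I, α i = 0) ∧
      (∑ i, q i * (α i : ℝ)) ≤ B}
      (fun α => ∑ i, q i * (α i : ℝ)) hT'fin ⟨α₀, ⟨hc₀, hz₀⟩, le_refl B⟩
  set d₀ : ℝ := ∑ i, q i * ((αs i : ℕ) : ℝ) with hd₀def
  have hmin : ∀ α : Fin n →₀ ℕ, MvPowerSeries.coeff α h ≠ 0 → (∀ i ∉ I, α i = 0) →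
      d₀ ≤ ∑ i, q i * (α i : ℝ) := by
    intro α hcα hzα
    by_cases hle : (∑ i, q i * (α i : ℝ)) ≤ B
    · exact hαsmin α ⟨⟨hcα, hzα⟩, hle⟩
    · push_neg at hle
      have hdB : d₀ ≤ B := hαsmin α₀ ⟨⟨hc₀, hz₀⟩, le_refl B⟩
      linarith
  -- choice of the strictly positive vector q'
  set M : ℝ := |d₀| + 1 with hMdef
  have hM : 0 < M := by positivity
  have hdM : d₀ < M := lt_of_le_of_lt (le_abs_self d₀) (by rw [hMdef]; linarith)
  set q' : Fin n → ℝ := fun i => if i ∈ I then q i else M with hq'def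
  have hq'pos : ∀ i, 0 < q' i := fun i => by
    by_cases hi : i ∈ I
    · simpa [hq'def, hi] using hqpos i hi
    · simpa [hq'def, hi] using hM
  have hfq'eq : ∀ α : Fin n →₀ ℕ, (∀ i ∉ I, α i = 0) →
      (∑ i, q' i * (α i : ℝ)) = ∑ i, q i * (α i : ℝ) := by
    intro α hzα
    refine Finset.sum_congr rfl fun i _ => ?_
    by_cases hi : i ∈ I
    · simp [hq'def, hi]
    · simp [hzα i hi]
  have hfq'big : ∀ α : Fin n →₀ ℕ, ¬ (∀ i ∉ I, α i = 0) →
      d₀ < ∑ i, q' i * (α i : ℝ) := by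
    intro α hα
    push_neg at hα
    obtain ⟨j, hjI, hjα⟩ := hα
    have h1 : (1 : ℝ) ≤ (α j : ℝ) := by exact_mod_cast Nat.one_le_iff_ne_zero.mpr hjα
    have h2 : M ≤ q' j * (α j : ℝ) := by
      have hqj : q' j = M := by simp [hq'def, hjI]
      rw [hqj]
      nlinarith
    have h3 : q' j * (α j : ℝ) ≤ ∑ i, q' i * (α i : ℝ) :=
      Finset.single_le_sum (f := fun i => q' i * (α i : ℝ))
        (fun i _ => mul_nonneg (hq'pos i).le (Nat.cast_nonneg _)) (Finset.mem_univ j)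
    linarith
  refine ⟨q', hq'pos, ?_⟩
  have hminT : ∀ α ∈ {α : Fin n →₀ ℕ | MvPowerSeries.coeff α h ≠ 0 ∧
      ∀ i ∉ I, α i = 0}, d₀ ≤ ∑ i, q i * (α i : ℝ) :=
    fun α hα => hmin α hα.1 hα.2
  have hexT : ∃ α ∈ {α : Fin n →₀ ℕ | MvPowerSeries.coeff α h ≠ 0 ∧
      ∀ i ∉ I, α i = 0}, (∑ i, q i * (α i : ℝ)) = d₀ := ⟨αs, hαsT, hd₀def.symm⟩
  have hminS : ∀ α ∈ {α : Fin n →₀ ℕ | MvPowerSeries.coeff α h ≠ 0},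
      d₀ ≤ ∑ i, q' i * (α i : ℝ) := by
    intro α hα
    by_cases hzα : ∀ i ∉ I, α i = 0
    · rw [hfq'eq α hzα]
      exact hmin α hα hzα
    · exact (hfq'big α hzα).le
  have hexS : ∃ α ∈ {α : Fin n →₀ ℕ | MvPowerSeries.coeff α h ≠ 0},
      (∑ i, q' i * (α i : ℝ)) = d₀ := by
    refine ⟨αs, hαsT.1, ?_⟩
    rw [hfq'eq αs hαsT.2]
  rw [stmt3_faceIn n I q hq0 hqpos _ d₀ hminT hexT,
    stmt3_faceFull n q' hq'pos _ d₀ hminS hexS]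
  congr 1
  ext x
  constructor
  · rintro ⟨α, ⟨hcα, hzα⟩, hfα, rfl⟩
    refine ⟨α, hcα, ?_, rfl⟩
    rw [hfq'eq α hzα]
    exact hfα
  · rintro ⟨α, hcα, hfα, rfl⟩
    have hzα : ∀ i ∉ I, α i = 0 := by
      by_contra hcon
      exact absurd hfα (hfq'big α hcon).ne'
    refine ⟨α, ⟨hcα, hzα⟩, ?_, rfl⟩
    rw [← hfq'eq α hzα]
    exact hfα
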